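/- Let k ≥ 2 be an integer and let 𝒬 = [a,b,c] be a positive definite integral binary quadratic form of discriminant −D (D > 0, a > 0, b² − 4ac = −D), with CM-point τ_𝒬 := (−b + i√D)/(2a) and v_𝒬 := √D/(2a). Then for every z = x + iy in the upper half-plane with z ≠ τ_𝒬, ((z − τ_𝒬)(z − conj(τ_𝒬))/(2 v_𝒬))^{k−1} · ∫₀^{arsinh(1/sinh(d(z,τ_𝒬)))} sinh(θ)^{2k−2} dθ = D^{(1−k)/2} · 𝒬(z,1)^{k−1} · ∫₀^{artanh(√D/𝒬_z)} sinh(θ)^{2k−2} dθ, where d denotes the hyperbolic distance on the upper half-plane, 𝒬(z,1) := a z² + b z + c, and 𝒬_z := (a(x²+y²)+bx+c)/y. -/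

import Mathlib

/-- The real inverse hyperbolic tangent, `artanh x = (1/2) log((1+x)/(1−x))`. -/
noncomputable def artanh (x : ℝ) : ℝ := (1 / 2) * Real.log ((1 + x) / (1 - x))

lemma arsinh_inv_sinh_eq {d : ℝ} (hd : 0 < d) :
    Real.arsinh (1 / Real.sinh d) = artanh (1 / Real.cosh d) := by
  have hsh : 0 < Real.sinh d := Real.sinh_pos_iff.mpr hd
  have hch : 0 < Real.cosh d := Real.cosh_pos d
  have hsq : Real.cosh d ^ 2 = 1 + Real.sinh d ^ 2 := Real.cosh_sq' d
  have hch1 : 1 < Real.cosh d := by nlinarith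
  have hsqrt : Real.sqrt (1 + (1 / Real.sinh d) ^ 2) = Real.cosh d / Real.sinh d := by
    rw [show 1 + (1 / Real.sinh d) ^ 2 = (Real.cosh d / Real.sinh d) ^ 2 by
      field_simp; nlinarith]
    exact Real.sqrt_sq (by positivity)
  unfold Real.arsinh artanh
  rw [hsqrt]
  have h1 : 1 / Real.sinh d + Real.cosh d / Real.sinh d
      = (1 + Real.cosh d) / Real.sinh d := by ring
  have h2 : (1 + 1 / Real.cosh d) / (1 - 1 / Real.cosh d)
      = ((1 + Real.cosh d) / Real.sinh d) ^ 2 := by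
    have hpos : (0:ℝ) < 1 - 1 / Real.cosh d := by
      rw [sub_pos, div_lt_one hch]; exact hch1
    rw [div_pow, div_eq_div_iff hpos.ne' (by positivity)]
    field_simp
    nlinarith
  rw [h1, h2, Real.log_pow]
  push_cast
  ring

/-- For an integer `k ≥ 2` and a positive definite integral binary quadratic
form `𝒬 = [a,b,c]` of discriminant `−D` with CM-point `τ_𝒬` and `v_𝒬 = √D/(2a)`, for every
`z` in the upper half-plane with `z ≠ τ_𝒬`:
`((z − τ_𝒬)(z − conj τ_𝒬)/(2v_𝒬))^{k−1} ∫₀^{arsinh(1/sinh d(z,τ_𝒬))} sinh(θ)^{2k−2} dθ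
  = D^{(1−k)/2} 𝒬(z,1)^{k−1} ∫₀^{artanh(√D/𝒬_z)} sinh(θ)^{2k−2} dθ`. -/
theorem stmt_12 (k : ℕ) (hk : 2 ≤ k) (a b c D : ℤ) (hD : 0 < D) (ha : 0 < a)
    (hdisc : b ^ 2 - 4 * a * c = -D)
    (τ : UpperHalfPlane)
    (hτ : (τ : ℂ) = (-(b : ℂ) + (Real.sqrt D : ℂ) * Complex.I) / (2 * (a : ℂ)))
    (vQ : ℝ) (hvQ : vQ = Real.sqrt D / (2 * a))
    (z : UpperHalfPlane) (hz : z ≠ τ) :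
    (((z : ℂ) - (τ : ℂ)) * ((z : ℂ) - (starRingEnd ℂ) (τ : ℂ)) / ((2 * vQ : ℝ) : ℂ)) ^ (k - 1)
        * ((∫ θ in (0:ℝ)..Real.arsinh (1 / Real.sinh (dist z τ)),
            Real.sinh θ ^ (2 * k - 2) : ℝ) : ℂ)
      = ((Real.sqrt D ^ ((1 : ℤ) - (k : ℤ)) : ℝ) : ℂ)
          * ((a : ℂ) * (z : ℂ) ^ 2 + (b : ℂ) * (z : ℂ) + (c : ℂ)) ^ (k - 1)
          * ((∫ θ in (0:ℝ)..artanh (Real.sqrt D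
                / (((a : ℝ) * (z.re ^ 2 + z.im ^ 2) + (b : ℝ) * z.re + (c : ℝ)) / z.im)),
              Real.sinh θ ^ (2 * k - 2) : ℝ) : ℂ) := by
  have hD' : (0:ℝ) < (D : ℝ) := by exact_mod_cast hD
  have ha' : (0:ℝ) < (a : ℝ) := by exact_mod_cast ha
  set s : ℝ := Real.sqrt D with hsdef
  have hs : 0 < s := Real.sqrt_pos.mpr hD'
  have hs2 : s ^ 2 = (D : ℝ) := Real.sq_sqrt hD'.le
  have hdisc' : (b : ℝ) ^ 2 - 4 * a * c = -(D : ℝ) := by exact_mod_cast hdisc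
  have hsbc : s ^ 2 = 4 * (a : ℝ) * c - (b : ℝ) ^ 2 := by rw [hs2]; linarith
  have hsbcC : ((s : ℂ)) ^ 2 = 4 * (a : ℂ) * c - (b : ℂ) ^ 2 := by
    exact_mod_cast congrArg (Complex.ofReal) hsbc
  have haC : (a : ℂ) ≠ 0 := by exact_mod_cast ha.ne'
  have hsC : (s : ℂ) ≠ 0 := by exact_mod_cast hs.ne'
  have hzim : 0 < z.im := z.im_pos
  -- conjugate of τ
  have hconj : (starRingEnd ℂ) (τ : ℂ) = (-(b : ℂ) - (s : ℂ) * Complex.I) / (2 * (a : ℂ)) := by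
    rw [hτ, map_div₀]
    simp [Complex.conj_I, map_ofNat]
    ring
  -- coefficient identity
  have hcoef : ((z : ℂ) - (τ : ℂ)) * ((z : ℂ) - (starRingEnd ℂ) (τ : ℂ)) / ((2 * vQ : ℝ) : ℂ)
      = ((a : ℂ) * (z : ℂ) ^ 2 + (b : ℂ) * (z : ℂ) + (c : ℂ)) / (s : ℂ) := by
    rw [hconj, hτ, hvQ]
    push_cast
    field_simp
    linear_combination hsbcC - (s:ℂ)^2 * Complex.I_sq
  -- τ real and imaginary parts
  have hτre : UpperHalfPlane.re τ = -(b : ℝ) / (2 * a) := by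
    have h := congrArg Complex.re hτ
    simp [Complex.div_re, Complex.normSq, Complex.add_re, Complex.mul_re] at h
    rw [h]; field_simp
  have hτim : UpperHalfPlane.im τ = s / (2 * a) := by
    have h := congrArg Complex.im hτ
    simp [Complex.div_im, Complex.normSq, Complex.add_im, Complex.mul_im] at h
    rw [h]; field_simp
  -- the distance squared
  have hdist2 : dist (z : ℂ) (τ : ℂ) ^ 2
      = (z.re - UpperHalfPlane.re τ) ^ 2 + (z.im - UpperHalfPlane.im τ) ^ 2 := by
    rw [Complex.dist_eq_re_im, Real.sq_sqrt (by positivity)]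
    rfl
  -- cosh of the hyperbolic distance
  set Q : ℝ := (a : ℝ) * (z.re ^ 2 + z.im ^ 2) + (b : ℝ) * z.re + (c : ℝ) with hQdef
  have hcosh : Real.cosh (dist z τ) = Q / z.im / s := by
    rw [UpperHalfPlane.cosh_dist, hdist2, hτre, hτim, hQdef]
    field_simp
    linear_combination hsbc
  have hchpos : 0 < Real.cosh (dist z τ) := Real.cosh_pos _
  have hQ' : Q / z.im = Real.cosh (dist z τ) * s := by
    rw [hcosh]; field_simp
  -- the endpoints of the two integrals agree
  have hd0 : 0 < dist z τ := dist_pos.mpr hz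
  have harg : s / (Q / z.im) = 1 / Real.cosh (dist z τ) := by
    rw [hQ', mul_comm, ← div_div, div_self hs.ne']
  have hend : artanh (s / (Q / z.im)) = Real.arsinh (1 / Real.sinh (dist z τ)) := by
    rw [harg, arsinh_inv_sinh_eq hd0]
  -- final assembly
  rw [hcoef, ← hend]
  have hpow : (((a : ℂ) * (z : ℂ) ^ 2 + (b : ℂ) * (z : ℂ) + (c : ℂ)) / (s : ℂ)) ^ (k - 1)
      = ((s ^ ((1 : ℤ) - (k : ℤ)) : ℝ) : ℂ)
        * ((a : ℂ) * (z : ℂ) ^ 2 + (b : ℂ) * (z : ℂ) + (c : ℂ)) ^ (k - 1) := by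
    have h1k : ((1 : ℤ) - (k : ℤ)) = -(((k - 1 : ℕ) : ℤ)) := by
      have : ((k - 1 : ℕ) : ℤ) = (k : ℤ) - 1 := by omega
      rw [this]; ring
    rw [Complex.ofReal_zpow, h1k, zpow_neg, zpow_natCast, div_pow]
    rw [div_eq_mul_inv, mul_comm]
  rw [hpow, mul_assoc]
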